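/- Let γ, α, λ, θ₁, θ₂ be real numbers with γ ≠ 1, α ∉ {0,1}, α/(1−γ) > 0, 0 ≤ λ ≤ 1 and 0 < θ₁ ≤ θ₂. Set β := (1−γ−α)/(1−γ), S := λθ₁ + (1−λ)θ₂ and D := λθ₁^β + (1−λ)θ₂^β (real powers of positive numbers). Then θ₁^β · S^{α/(α−1)} / D^{α/(α−1)} ≥ θ₁ · S^{1/(α−1)} / D^{1/(α−1)}. -/

import Mathlib

/-- Key algebraic inequality in the proof of the Proposition of Section 5.2:
with `β = (1-γ-α)/(1-γ)`, `S = λθ₁ + (1-λ)θ₂`, `D = λθ₁^β + (1-λ)θ₂^β`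
(real powers), if `0 < θ₁ ≤ θ₂`, `α/(1-γ) > 0`, `0 ≤ λ ≤ 1`, then
`θ₁^β S^{α/(α-1)} / D^{α/(α-1)} ≥ θ₁ S^{1/(α-1)} / D^{1/(α-1)}`. -/
theorem statement7 (γ α lam θ₁ θ₂ : ℝ) (hγ : γ ≠ 1) (hα0 : α ≠ 0) (hα1 : α ≠ 1)
    (hpos : 0 < α / (1 - γ)) (hl0 : 0 ≤ lam) (hl1 : lam ≤ 1)
    (h1 : 0 < θ₁) (h12 : θ₁ ≤ θ₂) :
    θ₁ ^ ((1 - γ - α) / (1 - γ))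
        * (lam * θ₁ + (1 - lam) * θ₂) ^ (α / (α - 1))
        / (lam * θ₁ ^ ((1 - γ - α) / (1 - γ))
            + (1 - lam) * θ₂ ^ ((1 - γ - α) / (1 - γ))) ^ (α / (α - 1))
      ≥ θ₁ * (lam * θ₁ + (1 - lam) * θ₂) ^ ((1 : ℝ) / (α - 1))
        / (lam * θ₁ ^ ((1 - γ - α) / (1 - γ))
            + (1 - lam) * θ₂ ^ ((1 - γ - α) / (1 - γ))) ^ ((1 : ℝ) / (α - 1)) := by
  have hγ' : (1 : ℝ) - γ ≠ 0 := sub_ne_zero.mpr (Ne.symm hγ)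
  set p : ℝ := α / (1 - γ) with hp
  set β : ℝ := (1 - γ - α) / (1 - γ) with hβ
  have hβp : β = 1 - p := by
    rw [hβ, hp]; field_simp
  have h2 : (0 : ℝ) < θ₂ := lt_of_lt_of_le h1 h12
  set S : ℝ := lam * θ₁ + (1 - lam) * θ₂ with hS
  set D : ℝ := lam * θ₁ ^ β + (1 - lam) * θ₂ ^ β with hD
  have hSpos : 0 < S := by
    have : lam * θ₁ + (1 - lam) * θ₁ ≤ S := by
      have : (1 - lam) * θ₁ ≤ (1 - lam) * θ₂ :=
        mul_le_mul_of_nonneg_left h12 (by linarith)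
      simp only [hS]; nlinarith [mul_le_mul_of_nonneg_left h12 (sub_nonneg.mpr hl1)]
    nlinarith
  have hb1 : 0 < θ₁ ^ β := Real.rpow_pos_of_pos h1 β
  have hb2 : 0 < θ₂ ^ β := Real.rpow_pos_of_pos h2 β
  have hDpos : 0 < D := by
    rcases lt_or_ge lam 1 with h | h
    · have := mul_pos (sub_pos.mpr h) hb2
      nlinarith [mul_nonneg hl0 hb1.le]
    · have hl : lam = 1 := le_antisymm hl1 h
      simp [hD, hl, hb1]
  -- key: θ₁ ^ β * S ≥ θ₁ * D
  have hmono : θ₂ ^ (-p) ≤ θ₁ ^ (-p) := by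
    rw [Real.rpow_neg h1.le, Real.rpow_neg h2.le]
    exact inv_anti₀ (Real.rpow_pos_of_pos h1 p)
      (Real.rpow_le_rpow h1.le h12 hpos.le)
  have hkey : θ₁ * D ≤ θ₁ ^ β * S := by
    have e1 : θ₁ ^ β = θ₁ * θ₁ ^ (-p) := by
      rw [hβp, sub_eq_add_neg, Real.rpow_add h1, Real.rpow_one]
    have e2 : θ₂ ^ β = θ₂ * θ₂ ^ (-p) := by
      rw [hβp, sub_eq_add_neg, Real.rpow_add h2, Real.rpow_one]
    have h3 : θ₂ * θ₂ ^ (-p) ≤ θ₂ * θ₁ ^ (-p) :=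
      mul_le_mul_of_nonneg_left hmono h2.le
    rw [e1, hS, hD, e1, e2]
    have hl1' : (0 : ℝ) ≤ 1 - lam := by linarith
    nlinarith [mul_le_mul_of_nonneg_left h3 hl1', Real.rpow_pos_of_pos h1 (-p)]
  -- exponent split
  have hα1' : α - 1 ≠ 0 := sub_ne_zero.mpr hα1
  have hq : α / (α - 1) = 1 / (α - 1) + 1 := by field_simp; ring
  set r : ℝ := 1 / (α - 1) with hr
  have hSq : S ^ (α / (α - 1)) = S ^ r * S := by
    rw [hq, Real.rpow_add hSpos, Real.rpow_one]
  have hDq : D ^ (α / (α - 1)) = D ^ r * D := by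
    rw [hq, Real.rpow_add hDpos, Real.rpow_one]
  have hSr : 0 < S ^ r := Real.rpow_pos_of_pos hSpos r
  have hDr : 0 < D ^ r := Real.rpow_pos_of_pos hDpos r
  rw [ge_iff_le, hSq, hDq, div_le_div_iff₀ hDr (by positivity)]
  calc θ₁ * S ^ r * (D ^ r * D) = (S ^ r * D ^ r) * (θ₁ * D) := by ring
    _ ≤ (S ^ r * D ^ r) * (θ₁ ^ β * S) :=
        mul_le_mul_of_nonneg_left hkey (by positivity)
    _ = θ₁ ^ β * (S ^ r * S) * D ^ r := by ring
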